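/- Let (a_n)_{n≥0} and (b_n)_{n≥0} be sequences of complex numbers and, for n ≥ 0, let A_n be the linear operator on ℂ² given by the companion matrix A_n = [[0, 1], [b_n, a_n]] (so A_n(z₁,z₂) = (z₂, b_n z₁ + a_n z₂)). Assume the sequence (A_n)_{n≥0} admits an exponential dichotomy on ℤ₀⁺ with constants C, λ > 0. Then the linear recurrence x_{n+2} = a_n x_{n+1} + b_n x_n, n ≥ 0, has the ℓ^∞-Lipschitz shadowing property: there exists L > 0 such that for every ε > 0 and every sequence (w_n)_{n≥0} ⊂ ℂ with sup_{n≥0} |w_{n+2} − a_n w_{n+1} − b_n w_n| ≤ Lε, there exists a sequence (x_n)_{n≥0} ⊂ ℂ with x_{n+2} = a_n x_{n+1} + b_n x_n for all n ≥ 0 and sup_{n≥0} |x_n − w_n| ≤ ε. -/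

import Mathlib

/-- The forward products `𝒜(m,n) = A_{m-1} ⋯ A_n` for `m ≥ n ≥ 0`
(equal to the identity when `m ≤ n`). -/
noncomputable def calAN {X : Type*} [NormedAddCommGroup X] [NormedSpace ℂ X]
    (A : ℕ → X →L[ℂ] X) (m n : ℕ) : X →L[ℂ] X :=
  (List.range (m - n)).foldl (fun B k => (A (n + k)).comp B)
    (ContinuousLinearMap.id ℂ X)

/-- The sequence `(A_m)_{m ≥ 0}` admits an exponential dichotomy on `ℤ₀⁺` with constants
`C, lam > 0`.  For `m ≤ n`, the operator `𝒜(m,n)` (the inverse of `𝒜(n,m)` restricted to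
`Ker P_m`) is described implicitly: `w = 𝒜(m,n)(Id - P_n) x` iff `w ∈ Ker P_m` and
`𝒜(n,m) w = x - P_n x`. -/
def ExpDichotomyN {X : Type*} [NormedAddCommGroup X] [NormedSpace ℂ X]
    (A : ℕ → X →L[ℂ] X) (C lam : ℝ) : Prop :=
  ∃ P : ℕ → X →L[ℂ] X,
    (∀ m, (P m).comp (P m) = P m) ∧
    (∀ m, (P (m + 1)).comp (A m) = (A m).comp (P m)) ∧
    (∀ m, Set.BijOn (A m) (LinearMap.ker (P m : X →ₗ[ℂ] X) : Set X)
      (LinearMap.ker (P (m + 1) : X →ₗ[ℂ] X) : Set X)) ∧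
    (∀ m n : ℕ, n ≤ m → ‖(calAN A m n).comp (P n)‖ ≤ C * Real.exp (-lam * ((m : ℝ) - n))) ∧
    (∀ m n : ℕ, m ≤ n → ∀ x w : X, w ∈ LinearMap.ker (P m : X →ₗ[ℂ] X) →
      calAN A n m w = x - P n x → ‖w‖ ≤ C * Real.exp (-lam * ((n : ℝ) - m)) * ‖x‖)

section aux
variable {X : Type*} [NormedAddCommGroup X] [NormedSpace ℂ X] (A : ℕ → X →L[ℂ] X)

lemma foldl_comp_aux (l : List ℕ) (B : X →L[ℂ] X) :
    l.foldl (fun B k => (A k).comp B) B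
      = (l.foldl (fun B k => (A k).comp B) (ContinuousLinearMap.id ℂ X)).comp B := by
  induction l generalizing B with
  | nil => simp
  | cons k l ih =>
    simp only [List.foldl_cons]
    rw [ih, ih ((A k).comp (ContinuousLinearMap.id ℂ X))]
    ext x; simp

lemma calAN_self (n : ℕ) : calAN A n n = ContinuousLinearMap.id ℂ X := by
  simp [calAN]

lemma calAN_succ (m n : ℕ) (h : n ≤ m) :
    calAN A (m + 1) n = (A m).comp (calAN A m n) := by
  unfold calAN
  rw [show m + 1 - n = (m - n) + 1 by omega, List.range_succ, List.foldl_append]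
  simp only [List.foldl_cons, List.foldl_nil]
  rw [Nat.add_sub_cancel' h]

lemma calAN_succ_left (m n : ℕ) (h : m < n) :
    calAN A n m = (calAN A n (m + 1)).comp (A m) := by
  unfold calAN
  rw [show n - m = (n - (m + 1)) + 1 by omega, List.range_succ_eq_map]
  simp only [List.foldl_cons, List.foldl_map]
  have hfun : (fun (B : X →L[ℂ] X) (k : ℕ) => (A (m + Nat.succ k)).comp B)
      = fun B k => (A (m + 1 + k)).comp B := by
    funext B k; congr 2; omega
  rw [hfun]
  rw [foldl_comp_aux (fun k => A (m + 1 + k)) (List.range (n - (m+1)))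
    ((A (m + 0)).comp (ContinuousLinearMap.id ℂ X))]
  ext x; simp

end aux

/-- Hyers–Ulam stability for second-order linear recurrences: if the companion-matrix system
`A_n(z₁, z₂) = (z₂, b_n z₁ + a_n z₂)` on `ℂ²` (with the max norm) admits an exponential
dichotomy on `ℤ₀⁺`, then the recurrence `x_{n+2} = a_n x_{n+1} + b_n x_n` has the
`ℓ^∞`-Lipschitz shadowing property. -/
theorem recurrence_hyers_ulam
    (a b : ℕ → ℂ) (A : ℕ → (ℂ × ℂ) →L[ℂ] (ℂ × ℂ))
    (hA : ∀ n : ℕ, ∀ z : ℂ × ℂ, A n z = (z.2, b n * z.1 + a n * z.2))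
    (C lam : ℝ) (hC : 0 < C) (hlam : 0 < lam)
    (h : ExpDichotomyN A C lam) :
    ∃ L : ℝ, 0 < L ∧ ∀ ε : ℝ, 0 < ε → ∀ w : ℕ → ℂ,
      (∀ n : ℕ, ‖w (n + 2) - a n * w (n + 1) - b n * w n‖ ≤ L * ε) →
      ∃ x : ℕ → ℂ, (∀ n : ℕ, x (n + 2) = a n * x (n + 1) + b n * x n) ∧
        ∀ n : ℕ, ‖x n - w n‖ ≤ ε := by
  classical
  obtain ⟨P, hPid, hcomm, hbij, hb1, hb2⟩ := h
  set r : ℝ := Real.exp (-lam) with hrdef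
  have hr0 : 0 < r := Real.exp_pos _
  have hr1 : r < 1 := Real.exp_lt_one_iff.mpr (by linarith)
  have h1r : 0 < 1 - r := by linarith
  set L : ℝ := (1 - r) / (2 * C) with hLdef
  have hL : 0 < L := by positivity
  refine ⟨L, hL, ?_⟩
  intro ε hε w hw
  set y : ℕ → ℂ × ℂ := fun k => (0, w (k+2) - a k * w (k+1) - b k * w k) with hy
  have hynorm : ∀ k, ‖y k‖ ≤ L * ε := by
    intro k
    simp only [hy, Prod.norm_def, norm_zero]
    rw [max_eq_right (norm_nonneg _)]
    exact hw k
  -- kernel facts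
  have hker : ∀ (n : ℕ) (x : ℂ × ℂ), x - P n x ∈ LinearMap.ker (P n : (ℂ × ℂ) →ₗ[ℂ] (ℂ × ℂ)) := by
    intro n x
    have h2 : P n (P n x) = P n x := by
      rw [← ContinuousLinearMap.comp_apply, hPid n]
    simp [LinearMap.mem_ker, map_sub, h2]
  have hmaps : ∀ (m : ℕ), ∀ z ∈ LinearMap.ker (P m : (ℂ × ℂ) →ₗ[ℂ] (ℂ × ℂ)), A m z ∈ LinearMap.ker (P (m+1) : (ℂ × ℂ) →ₗ[ℂ] (ℂ × ℂ)) :=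
    fun m => (hbij m).mapsTo
  have hbijN : ∀ n m : ℕ, n ≤ m →
      Set.BijOn (calAN A m n) (LinearMap.ker (P n : (ℂ × ℂ) →ₗ[ℂ] (ℂ × ℂ)) : Set (ℂ × ℂ))
        (LinearMap.ker (P m : (ℂ × ℂ) →ₗ[ℂ] (ℂ × ℂ)) : Set (ℂ × ℂ)) := by
    intro n m hnm
    induction m, hnm using Nat.le_induction with
    | base =>
      rw [calAN_self]
      simpa using Set.bijOn_id (LinearMap.ker (P n : (ℂ × ℂ) →ₗ[ℂ] (ℂ × ℂ)) : Set (ℂ × ℂ))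
    | succ m hm ih =>
      rw [calAN_succ A m n hm, ContinuousLinearMap.coe_comp']
      exact Set.BijOn.comp (hbij m) ih
  -- the Green's function operator g
  have hgex : ∀ m n : ℕ, m ≤ n → ∀ x : ℂ × ℂ,
      ∃ v, v ∈ LinearMap.ker (P m : (ℂ × ℂ) →ₗ[ℂ] (ℂ × ℂ)) ∧ calAN A n m v = x - P n x := by
    intro m n hmn x
    obtain ⟨v, hv1, hv2⟩ := (hbijN m n hmn).surjOn (hker n x)
    exact ⟨v, hv1, hv2⟩
  choose g hgmem hgeq using hgex
  have hguniq : ∀ (m n : ℕ) (hmn : m ≤ n) (x v : ℂ × ℂ), v ∈ LinearMap.ker (P m : (ℂ × ℂ) →ₗ[ℂ] (ℂ × ℂ)) →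
      calAN A n m v = x - P n x → v = g m n hmn x := by
    intro m n hmn x v hv1 hv2
    exact (hbijN m n hmn).injOn hv1 (hgmem m n hmn x)
      (hv2.trans (hgeq m n hmn x).symm)
  have hgbound : ∀ (m n : ℕ) (hmn : m ≤ n) (x : ℂ × ℂ),
      ‖g m n hmn x‖ ≤ C * Real.exp (-lam * ((n : ℝ) - m)) * ‖x‖ :=
    fun m n hmn x => hb2 m n hmn x _ (hgmem m n hmn x) (hgeq m n hmn x)
  have hgself : ∀ (m : ℕ) (hm : m ≤ m) (x : ℂ × ℂ), g m m hm x = x - P m x := by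
    intro m hm x
    refine (hguniq m m hm x _ (hker m x) ?_).symm
    rw [calAN_self]; rfl
  have hgstep : ∀ (m n : ℕ) (hmn : m + 1 ≤ n) (x : ℂ × ℂ),
      A m (g m n (by omega) x) = g (m+1) n hmn x := by
    intro m n hmn x
    refine hguniq (m+1) n hmn x _ (hmaps m _ (hgmem m n (by omega) x)) ?_
    rw [← ContinuousLinearMap.comp_apply, ← calAN_succ_left A m n (by omega)]
    exact hgeq m n (by omega) x
  -- summability
  have hterm : ∀ (n j : ℕ), ‖g n (n+j+1) (by omega) (y (n+j))‖ ≤ C * (L * ε) * r ^ j := by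
    intro n j
    have h1 := hgbound n (n+j+1) (by omega) (y (n+j))
    have h2 : Real.exp (-lam * (((n+j+1 : ℕ) : ℝ) - n)) = r ^ (j+1) := by
      rw [show -lam * (((n+j+1 : ℕ) : ℝ) - n) = ((j+1 : ℕ) : ℝ) * (-lam) by push_cast; ring,
        Real.exp_nat_mul]
    rw [h2] at h1
    calc ‖g n (n+j+1) (by omega) (y (n+j))‖ ≤ C * r ^ (j+1) * ‖y (n+j)‖ := h1
      _ ≤ C * r ^ (j+1) * (L * ε) := by
          apply mul_le_mul_of_nonneg_left (hynorm _) (by positivity)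
      _ ≤ C * (L * ε) * r ^ j := by
          rw [pow_succ]
          have h4 : r ^ j * r ≤ r ^ j := by nlinarith [pow_nonneg hr0.le j]
          have h5 : (0:ℝ) ≤ C * (L * ε) := by positivity
          calc C * (r ^ j * r) * (L * ε) = C * (L * ε) * (r ^ j * r) := by ring
            _ ≤ C * (L * ε) * r ^ j := mul_le_mul_of_nonneg_left h4 h5
  have hsumnorm : ∀ n : ℕ, Summable (fun j : ℕ => ‖g n (n+j+1) (by omega) (y (n+j))‖) := by
    intro n
    apply Summable.of_nonneg_of_le (fun j => norm_nonneg _) (hterm n)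
    exact (summable_geometric_of_lt_one hr0.le hr1).mul_left _
  have hsum : ∀ n : ℕ, Summable (fun j : ℕ => g n (n+j+1) (by omega) (y (n+j))) :=
    fun n => (hsumnorm n).of_norm
  set T : ℕ → ℂ × ℂ := fun n => ∑' j : ℕ, g n (n+j+1) (by omega) (y (n+j)) with hT
  set S : ℕ → ℂ × ℂ := fun n => ∑ k ∈ Finset.range n, calAN A n (k+1) (P (k+1) (y k)) with hS
  set V : ℕ → ℂ × ℂ := fun n => S n - T n with hV
  -- recurrence for S
  have hSrec : ∀ n, S (n+1) = A n (S n) + P (n+1) (y n) := by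
    intro n
    simp only [hS]
    rw [Finset.sum_range_succ, calAN_self]
    simp only [ContinuousLinearMap.id_apply]
    congr 1
    rw [map_sum]
    apply Finset.sum_congr rfl
    intro k hk
    have hk' : k + 1 ≤ n := Finset.mem_range.mp hk
    rw [calAN_succ A n (k+1) hk', ContinuousLinearMap.comp_apply]
  -- recurrence for T
  have hTrec : ∀ n, A n (T n) = T (n+1) + (y n - P (n+1) (y n)) := by
    intro n
    rw [hT]
    rw [ContinuousLinearMap.map_tsum (A n) (hsum n)]
    have hfun : (fun j : ℕ => A n (g n (n+j+1) (by omega) (y (n+j))))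
        = fun j : ℕ => g (n+1) (n+j+1) (by omega) (y (n+j)) := by
      funext j
      exact hgstep n (n+j+1) (by omega) (y (n+j))
    rw [hfun]
    have hsum2 : Summable (fun j : ℕ => g (n+1) (n+j+1) (by omega) (y (n+j))) := by
      rw [← hfun]
      exact ((hsum n).map (A n).toLinearMap.toAddMonoidHom (A n).continuous)
    rw [Summable.tsum_eq_zero_add hsum2]
    rw [hgself (n+1) (le_refl _) (y (n+0))]
    have he1 : ∀ j : ℕ, n + (j+1) + 1 = (n+1) + j + 1 := fun j => by omega
    have he2 : ∀ j : ℕ, n + (j+1) = (n+1) + j := fun j => by omega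
    have : (fun j : ℕ => g (n+1) (n+(j+1)+1) (by omega) (y (n+(j+1))))
        = fun j : ℕ => g (n+1) ((n+1)+j+1) (by omega) (y ((n+1)+j)) := by
      funext j
      have e1 := he1 j
      have e2 := he2 j
      congr 1 <;> try rw [e2]
    rw [this]
    simp only [Nat.add_zero]
    abel
  have hVrec : ∀ n, V (n+1) = A n (V n) + y n := by
    intro n
    rw [hV]
    simp only
    rw [hSrec n, map_sub, hTrec n]
    abel
  -- bound on S
  have hSbound : ∀ n, ‖S n‖ ≤ C * (L * ε) * (1 - r)⁻¹ := by
    intro n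
    calc ‖S n‖ ≤ ∑ k ∈ Finset.range n, ‖calAN A n (k+1) (P (k+1) (y k))‖ := norm_sum_le _ _
      _ ≤ ∑ k ∈ Finset.range n, C * (L * ε) * r ^ (n - 1 - k) := by
          apply Finset.sum_le_sum
          intro k hk
          have hk' : k < n := Finset.mem_range.mp hk
          have hcast : ((n - 1 - k : ℕ) : ℝ) = (n : ℝ) - ((k : ℝ) + 1) := by
            have : n - 1 - k + (k + 1) = n := by omega
            have := congrArg (Nat.cast : ℕ → ℝ) this
            push_cast at this
            linarith
          have h1 : ‖calAN A n (k+1) (P (k+1) (y k))‖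
              ≤ ‖(calAN A n (k+1)).comp (P (k+1))‖ * ‖y k‖ := by
            rw [← ContinuousLinearMap.comp_apply]
            exact (ContinuousLinearMap.le_opNorm _ _)
          have h2 := hb1 n (k+1) (by omega)
          have h3 : Real.exp (-lam * ((n : ℝ) - ((k : ℝ) + 1))) = r ^ (n - 1 - k) := by
            rw [← hcast, show -lam * ((n - 1 - k : ℕ) : ℝ) = ((n - 1 - k : ℕ) : ℝ) * (-lam) by ring,
              Real.exp_nat_mul]
          calc ‖calAN A n (k+1) (P (k+1) (y k))‖
              ≤ ‖(calAN A n (k+1)).comp (P (k+1))‖ * ‖y k‖ := h1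
            _ ≤ (C * Real.exp (-lam * ((n : ℝ) - ((k : ℝ) + 1)))) * (L * ε) := by
                apply mul_le_mul (by exact_mod_cast h2) (hynorm k) (norm_nonneg _)
                positivity
            _ = C * (L * ε) * r ^ (n - 1 - k) := by rw [h3]; ring
      _ = C * (L * ε) * ∑ k ∈ Finset.range n, r ^ (n - 1 - k) := by
          rw [Finset.mul_sum]
      _ = C * (L * ε) * ∑ k ∈ Finset.range n, r ^ k := by
          rw [Finset.sum_range_reflect (fun j => r ^ j) n]
      _ ≤ C * (L * ε) * (1 - r)⁻¹ := by
          apply mul_le_mul_of_nonneg_left _ (by positivity)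
          rw [← tsum_geometric_of_lt_one hr0.le hr1]
          exact Summable.sum_le_tsum (Finset.range n) (fun i _ => by positivity)
            (summable_geometric_of_lt_one hr0.le hr1)
  have hTbound : ∀ n, ‖T n‖ ≤ C * (L * ε) * (1 - r)⁻¹ := by
    intro n
    calc ‖T n‖ ≤ ∑' j : ℕ, ‖g n (n+j+1) (by omega) (y (n+j))‖ :=
          norm_tsum_le_tsum_norm (hsumnorm n)
      _ ≤ ∑' j : ℕ, C * (L * ε) * r ^ j :=
          Summable.tsum_le_tsum (hterm n) (hsumnorm n)
            ((summable_geometric_of_lt_one hr0.le hr1).mul_left _)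
      _ = C * (L * ε) * (1 - r)⁻¹ := by
          rw [tsum_mul_left, tsum_geometric_of_lt_one hr0.le hr1]
  have hCL : C * (L * ε) * (1 - r)⁻¹ = ε / 2 := by
    rw [hLdef]
    field_simp
  have hVbound : ∀ n, ‖V n‖ ≤ ε := by
    intro n
    calc ‖V n‖ ≤ ‖S n‖ + ‖T n‖ := norm_sub_le _ _
      _ ≤ ε / 2 + ε / 2 := by
          rw [← hCL]; exact add_le_add (hSbound n) (hTbound n)
      _ = ε := by ring
  -- the shadow
  set Wp : ℕ → ℂ × ℂ := fun n => (w n, w (n+1)) with hWp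
  have hWrec : ∀ n, Wp (n+1) = A n (Wp n) + y n := by
    intro n
    rw [hA]
    simp only [hWp, hy, Prod.mk_add_mk, Prod.mk.injEq]
    constructor
    · ring
    · ring
  have hXrec : ∀ n, Wp (n+1) - V (n+1) = A n (Wp n - V n) := by
    intro n
    rw [hWrec, hVrec n, show V n = S n - T n from rfl]
    simp only [map_sub]
    abel
  set x : ℕ → ℂ := fun n => (Wp n - V n).1 with hx
  have hx1 : ∀ n, x (n+1) = (Wp n - V n).2 := by
    intro n
    rw [hx]
    simp only
    rw [hXrec n, hA]
  refine ⟨x, ?_, ?_⟩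
  · intro n
    have e1 : x (n+2) = (Wp (n+1) - V (n+1)).2 := hx1 (n+1)
    rw [e1, hXrec n, hA]
    simp only
    rw [hx1 n]
    rw [hx]
    simp only
    ring
  · intro n
    have e : x n - w n = -(V n).1 := by
      rw [hx]
      simp only [hWp, Prod.fst_sub]
      ring
    rw [e, norm_neg]
    exact le_trans (norm_fst_le (V n)) (hVbound n)
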